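/- For all powers of two m and n with m ≥ 16, n ≥ 4, and m ≤ 4n, the subgroup N of G(m,n) generated by a^4 is a characteristic subgroup of G(m,n), and the quotient G(m,n)/N is abelian. -/

import Mathlib

/-- The relators of the presentation `⟨a, b | a^m, b^n, [b,a] = a^4⟩`, where `a` is
`FreeGroup.of true`, `b` is `FreeGroup.of false`, and `[b,a] = b⁻¹a⁻¹ba`. -/
def GRels (m n : ℕ) : Set (FreeGroup Bool) :=
  { FreeGroup.of true ^ m,
    FreeGroup.of false ^ n,
    (FreeGroup.of false)⁻¹ * (FreeGroup.of true)⁻¹ * FreeGroup.of false *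
      FreeGroup.of true * (FreeGroup.of true ^ 4)⁻¹ }

/-- The group `G(m, n) = ⟨a, b | a^m, b^n, [b,a] = a^4⟩`. -/
abbrev Gmn (m n : ℕ) : Type := PresentedGroup (GRels m n)

/-- The image of the generator `a` in `G(m, n)`. -/
def gen_a (m n : ℕ) : Gmn m n := PresentedGroup.of true

/-- The image of the generator `b` in `G(m, n)`. -/
def gen_b (m n : ℕ) : Gmn m n := PresentedGroup.of false

open scoped commutatorElement

/-- Any relator maps to `1` in the presented group. -/
lemma GmnAux.mk_rel_one {m n : ℕ} {r : FreeGroup Bool} (hr : r ∈ GRels m n) :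
    PresentedGroup.mk (GRels m n) r = 1 :=
  (QuotientGroup.eq_one_iff r).2 (Subgroup.subset_normalClosure hr)

lemma GmnAux.rel_a (m n : ℕ) : gen_a m n ^ m = 1 := by
  have h := GmnAux.mk_rel_one (m := m) (n := n) (Set.mem_insert _ _)
  rw [map_pow] at h
  exact h

lemma GmnAux.rel_b (m n : ℕ) : gen_b m n ^ n = 1 := by
  have h := GmnAux.mk_rel_one (m := m) (n := n)
    (Set.mem_insert_of_mem _ (Set.mem_insert _ _))
  rw [map_pow] at h
  exact h

lemma GmnAux.rel_c (m n : ℕ) :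
    (gen_b m n)⁻¹ * (gen_a m n)⁻¹ * gen_b m n * gen_a m n = gen_a m n ^ 4 := by
  have h := GmnAux.mk_rel_one (m := m) (n := n)
    (Set.mem_insert_of_mem _ (Set.mem_insert_of_mem _ rfl))
  simp only [map_mul, map_inv, map_pow] at h
  have := mul_eq_one_iff_eq_inv.1 h
  rwa [inv_inv] at this

/-- conjugation of a generator stays in the closure implies conjugation of the whole
closure stays in the closure. -/
lemma GmnAux.conj_mem_closure {G : Type*} [Group G] {s c h : G}
    (hc : c * s * c⁻¹ ∈ Subgroup.closure {s}) (hh : h ∈ Subgroup.closure {s}) :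
    c * h * c⁻¹ ∈ Subgroup.closure {s} := by
  have hmap : Subgroup.map (MulAut.conj c).toMonoidHom (Subgroup.closure {s}) ≤
      Subgroup.closure {s} := by
    rw [MonoidHom.map_closure, Set.image_singleton]
    refine (Subgroup.closure_le _).2 ?_
    intro x hx
    rw [Set.mem_singleton_iff] at hx
    subst hx
    simpa using hc
  have : (MulAut.conj c) h ∈ Subgroup.closure {s} := hmap ⟨h, hh, rfl⟩
  simpa using this

lemma GmnAux.conj_pow {G : Type*} [Group G] (c x : G) (k : ℕ) :
    c * x ^ k * c⁻¹ = (c * x * c⁻¹) ^ k := by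
  have h := map_pow (MulAut.conj c) x k
  simpa [MulAut.conj_apply] using h

/-- The subgroup `N = ⟨a^4⟩` of `G(m, n)` is characteristic, and the quotient
`G(m,n)/N` is abelian (i.e. every commutator lies in `N`). -/
theorem Gmn_N_characteristic_quotient_abelian (m n : ℕ)
    (hm : ∃ i, m = 2 ^ i) (hn : ∃ j, n = 2 ^ j)
    (hm16 : 16 ≤ m) (hn4 : 4 ≤ n) (hmn : m ≤ 4 * n) :
    (Subgroup.closure {gen_a m n ^ 4} : Subgroup (Gmn m n)).Characteristic ∧
    ∀ x y : Gmn m n, ⁅x, y⁆ ∈ (Subgroup.closure {gen_a m n ^ 4} : Subgroup (Gmn m n)) := by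
  classical
  set a := gen_a m n with ha
  set b := gen_b m n with hb
  set N : Subgroup (Gmn m n) := Subgroup.closure {a ^ 4} with hNdef
  have haN : a ^ 4 ∈ N := Subgroup.subset_closure rfl
  have hrel : b⁻¹ * a⁻¹ * b * a = a ^ 4 := GmnAux.rel_c m n
  have hrelm : a ^ m = 1 := GmnAux.rel_a m n
  -- b⁻¹ * a * b = (a^3)⁻¹
  have h3 : b⁻¹ * a⁻¹ * b = a ^ 3 := by
    have : (b⁻¹ * a⁻¹ * b * a) * a⁻¹ = a ^ 4 * a⁻¹ := by rw [hrel]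
    calc b⁻¹ * a⁻¹ * b = (b⁻¹ * a⁻¹ * b * a) * a⁻¹ := by group
      _ = a ^ 4 * a⁻¹ := by rw [hrel]
      _ = a ^ 3 := by group
  have h4 : b⁻¹ * a * b = (a ^ 3)⁻¹ := by
    have := congrArg (·⁻¹) h3
    simp only [mul_inv_rev, inv_inv] at this
    calc b⁻¹ * a * b = (b⁻¹ * a⁻¹ * b)⁻¹ := by group
      _ = (a ^ 3)⁻¹ := by rw [h3]
  -- the two key conjugation facts
  have hbinv : b⁻¹ * a ^ 4 * b ∈ N := by
    have : b⁻¹ * a ^ 4 * b = ((a ^ 4) ^ 3)⁻¹ := by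
      calc b⁻¹ * a ^ 4 * b = (b⁻¹ * a * b) ^ 4 := by
            have h := GmnAux.conj_pow b⁻¹ a 4
            rwa [inv_inv] at h
        _ = ((a ^ 3)⁻¹) ^ 4 := by rw [h4]
        _ = ((a ^ 4) ^ 3)⁻¹ := by group
    rw [this]
    exact N.inv_mem (N.pow_mem haN 3)
  -- existence of t with m ∣ 3t + 1
  obtain ⟨i, him⟩ := hm
  haveI : NeZero m := ⟨by omega⟩
  have hcop : Nat.Coprime 3 m := by
    rw [him]; exact Nat.Coprime.pow_right _ (by decide)
  have hu : IsUnit (3 : ZMod m) := by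
    have := (ZMod.isUnit_iff_coprime 3 m).2 hcop
    simpa using this
  obtain ⟨u, hu3⟩ := hu
  obtain ⟨t, s, hts⟩ : ∃ t s : ℕ, 3 * t + 1 = m * s := by
    refine ⟨(-(↑u⁻¹ : ZMod m)).val, ?_⟩
    have h0 : ((3 * (-(↑u⁻¹ : ZMod m)).val + 1 : ℕ) : ZMod m) = 0 := by
      push_cast
      rw [ZMod.natCast_zmod_val]
      have : (3 : ZMod m) * (-(↑u⁻¹ : ZMod m)) = -((u : ZMod m) * (↑u⁻¹ : ZMod m)) := by
        rw [hu3]; ring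
      rw [this]
      rw [← Units.val_mul, mul_inv_cancel]
      simp
    rw [ZMod.natCast_eq_zero_iff] at h0
    obtain ⟨s, hs⟩ := h0
    exact ⟨s, hs⟩
  -- b * a * b⁻¹ = a ^ t
  have hc3 : (b * a * b⁻¹) ^ 3 = a⁻¹ := by
    have h7 : a ^ 3 = (b⁻¹ * a * b)⁻¹ := by rw [h4, inv_inv]
    have : (b * a * b⁻¹) ^ 3 = b * a ^ 3 * b⁻¹ := (GmnAux.conj_pow b a 3).symm
    rw [this, h7]
    group
  have hcm : (b * a * b⁻¹) ^ m = 1 := by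
    have h8 : (b * a * b⁻¹) ^ m = (MulAut.conj b) (a ^ m) := by
      rw [map_pow]; simp [MulAut.conj_apply]
    rw [h8, hrelm, map_one]
  have hct : b * a * b⁻¹ = a ^ t := by
    have h8 : (b * a * b⁻¹) ^ (3 * t + 1) = 1 := by
      rw [hts, pow_mul, hcm, one_pow]
    have h9 : (b * a * b⁻¹) ^ (3 * t) * (b * a * b⁻¹) = 1 := by
      rw [← pow_succ]; exact h8
    have h10 : (b * a * b⁻¹) ^ (3 * t) = (a⁻¹) ^ t := by
      rw [pow_mul, hc3]
    rw [h10] at h9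
    have h11 : b * a * b⁻¹ = ((a⁻¹) ^ t)⁻¹ := eq_inv_of_mul_eq_one_right h9
    rw [h11, inv_pow, inv_inv]
  have hbconj : b * a ^ 4 * b⁻¹ ∈ N := by
    have : b * a ^ 4 * b⁻¹ = (a ^ 4) ^ t := by
      calc b * a ^ 4 * b⁻¹ = (b * a * b⁻¹) ^ 4 := (GmnAux.conj_pow b a 4)
        _ = (a ^ t) ^ 4 := by rw [hct]
        _ = (a ^ 4) ^ t := by rw [← pow_mul, ← pow_mul, mul_comm]
    rw [this]
    exact N.pow_mem haN t
  -- N is normal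
  haveI hNnormal : N.Normal := by
    rw [← Subgroup.normalizer_eq_top_iff, eq_top_iff]
    intro x _
    refine PresentedGroup.generated_by _ _ ?_ x
    intro j
    have hgen : ∀ c : Gmn m n, c * a ^ 4 * c⁻¹ ∈ N → c⁻¹ * a ^ 4 * c ∈ N →
        c ∈ Subgroup.normalizer (N : Set (Gmn m n)) := by
      intro c hc hc'
      rw [Subgroup.mem_normalizer_iff]
      intro h
      constructor
      · intro hh
        exact GmnAux.conj_mem_closure hc hh
      · intro hh
        have hc'' : c⁻¹ * a ^ 4 * (c⁻¹)⁻¹ ∈ N := by rwa [inv_inv]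
        have := GmnAux.conj_mem_closure hc'' hh
        simpa [mul_assoc] using this
    cases j with
    | true =>
      refine hgen a ?_ ?_
      · have : a * a ^ 4 * a⁻¹ = a ^ 4 := by group
        rw [this]; exact haN
      · have : a⁻¹ * a ^ 4 * a = a ^ 4 := by group
        rw [this]; exact haN
    | false =>
      exact hgen b hbconj hbinv
  -- the quotient is abelian: every commutator lies in N
  have key : ∀ x y : Gmn m n, ⁅x, y⁆ ∈ N := by
    have π := QuotientGroup.mk' N
    -- images of generators commute
    have hab : Commute ((QuotientGroup.mk' N) a) ((QuotientGroup.mk' N) b) := by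
      have h5 : (QuotientGroup.mk' N) (b⁻¹ * a⁻¹ * b * a) = 1 := by
        rw [hrel]
        exact (QuotientGroup.eq_one_iff _).2 haN
      simp only [map_mul, map_inv] at h5
      have h6 : (QuotientGroup.mk' N) b * (QuotientGroup.mk' N) a
          = (QuotientGroup.mk' N) a * (QuotientGroup.mk' N) b *
            (((QuotientGroup.mk' N) b)⁻¹ * ((QuotientGroup.mk' N) a)⁻¹ *
              (QuotientGroup.mk' N) b * (QuotientGroup.mk' N) a) := by group
      rw [h5, mul_one] at h6
      exact h6.symm
    -- each generator image commutes with every generator image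
    have hjj : ∀ j j' : Bool, Commute ((QuotientGroup.mk' N) (PresentedGroup.of j))
        ((QuotientGroup.mk' N) (PresentedGroup.of j')) := by
      intro j j'
      cases j <;> cases j'
      · exact Commute.refl _
      · exact hab.symm
      · exact hab
      · exact Commute.refl _
    -- every image is central
    have hcent : ∀ x : Gmn m n, (QuotientGroup.mk' N) x ∈ Subgroup.center (Gmn m n ⧸ N) := by
      intro x
      have : x ∈ (Subgroup.center (Gmn m n ⧸ N)).comap (QuotientGroup.mk' N) := by
        refine PresentedGroup.generated_by _ _ ?_ x
        intro j
        rw [Subgroup.mem_comap, Subgroup.mem_center_iff]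
        intro q
        obtain ⟨y, rfl⟩ := QuotientGroup.mk'_surjective N q
        have hy : y ∈ (Subgroup.centralizer {(QuotientGroup.mk' N) (PresentedGroup.of j)}).comap
            (QuotientGroup.mk' N) := by
          refine PresentedGroup.generated_by _ _ ?_ y
          intro j'
          rw [Subgroup.mem_comap, Subgroup.mem_centralizer_iff]
          intro z hz
          rw [Set.mem_singleton_iff] at hz
          subst hz
          exact (hjj j j')
        rw [Subgroup.mem_comap, Subgroup.mem_centralizer_iff] at hy
        exact (hy _ rfl).symm
      rwa [Subgroup.mem_comap] at this
    intro x y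
    have hx := hcent x
    have h1 : (QuotientGroup.mk' N) ⁅x, y⁆ = 1 := by
      rw [map_commutatorElement]
      exact commutatorElement_eq_one_iff_commute.2
        ((Subgroup.mem_center_iff.1 hx ((QuotientGroup.mk' N) y)).symm)
    exact (QuotientGroup.eq_one_iff _).1 h1
  -- N equals the commutator subgroup
  have heq : N = commutator (Gmn m n) := by
    apply le_antisymm
    · refine (Subgroup.closure_le _).2 ?_
      intro x hx
      rw [Set.mem_singleton_iff] at hx
      subst hx
      have : a ^ 4 = ⁅b⁻¹, a⁻¹⁆ := by
        rw [← hrel, commutatorElement_def]; group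
      rw [SetLike.mem_coe, this]
      exact Subgroup.commutator_mem_commutator (Subgroup.mem_top _) (Subgroup.mem_top _)
    · rw [commutator_def, Subgroup.commutator_le]
      intro g₁ _ g₂ _
      exact key g₁ g₂
  constructor
  · rw [heq]
    infer_instance
  · exact key
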